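/- Let G be a finite group, n ≥ 1, and let a = ((g₁,…,gₙ),s) be an element of the wreath product Gₙ = G ≀ Sₙ of type {m_r(c)}. Then the order of the centralizer of a in Gₙ is |C_{Gₙ}(a)| = ∏_{r ≥ 1} ∏_{[c]} m_r(c)! · (r·|C_G(c)|)^{m_r(c)}, where the product is over all r ≥ 1 and all conjugacy classes [c] of elements of G, and C_G(c) denotes the centralizer of c in G. -/

import Mathlib

open scoped BigOperators

/-- The action of permutations of `Fin n` on `Fin n → G` by `(s • g) i = g (s⁻¹ i)`,
as a homomorphism to the automorphism group. -/
def permAut (G : Type*) [Group G] (n : ℕ) : Equiv.Perm (Fin n) →* MulAut (Fin n → G) where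
  toFun s :=
    { toFun := fun g => g ∘ s.symm
      invFun := fun g => g ∘ s
      left_inv := fun g => by funext i; simp
      right_inv := fun g => by funext i; simp
      map_mul' := fun g h => rfl }
  map_one' := by ext g i; simp <;> rfl
  map_mul' s t := by ext g i; simp [Equiv.Perm.mul_def]

/-- The wreath product `G ≀ Sₙ`, the semidirect product of `Gⁿ` by the symmetric
group `Sₙ` permuting the factors. -/
abbrev WreathProduct (G : Type*) [Group G] (n : ℕ) :=
  (Fin n → G) ⋊[permAut G n] Equiv.Perm (Fin n)

/-- The action of the wreath product `G ≀ Sₙ` on `Xⁿ`: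
`((g₁,…,gₙ),s)·(x₁,…,xₙ) = (g₁ x_{s⁻¹(1)},…,gₙ x_{s⁻¹(n)})`. -/
instance wreathMulAction (G : Type*) [Group G] (X : Type*) [MulAction G X] (n : ℕ) :
    MulAction (WreathProduct G n) (Fin n → X) where
  smul a x := fun i => a.left i • x (a.right.symm i)
  one_smul x := by
    funext i
    show (1 : WreathProduct G n).left i • x ((1 : WreathProduct G n).right.symm i) = x i
    simp <;> rfl
  mul_smul a b x := by
    funext i
    show (a * b).left i • x ((a * b).right.symm i)
      = a.left i • (fun j => b.left j • x (b.right.symm j)) (a.right.symm i)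
    simp [SemidirectProduct.mul_left, SemidirectProduct.mul_right, permAut, mul_smul,
      Equiv.Perm.mul_def]

theorem wreath_smul_apply (G : Type*) [Group G] (X : Type*) [MulAction G X] (n : ℕ)
    (a : WreathProduct G n) (x : Fin n → X) (i : Fin n) :
    (a • x) i = a.left i • x (a.right.symm i) := rfl

open scoped Classical in
/-- The orbifold Euler characteristic of order `k` of a `G`-space `X`:
`χ⁽ᵏ⁾(X,G) = (1/|G|) Σ_{pairwise commuting (g₀,…,g_k)} |X^⟨g₀,…,g_k⟩|`. -/
noncomputable def orbChi (k : ℕ) (G : Type*) [Group G] (X : Type*) [MulAction G X] : ℚ :=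
  (∑ᶠ g : Fin (k + 1) → G,
      if ∀ i j, Commute (g i) (g j) then
        (Nat.card {x : X // ∀ i, g i • x = x} : ℚ)
      else 0) / (Nat.card G : ℚ)

/-- Generalized binomial coefficient `α choose j` for rational `α`. -/
noncomputable def qchoose (α : ℚ) (j : ℕ) : ℚ :=
  (∏ i ∈ Finset.range j, (α - i)) / (j.factorial : ℚ)

/-- The binomial series `(1 - t^m)^α ∈ ℚ⟦t⟧` for a rational exponent `α`:
its coefficient at `t^(m·j)` is `(-1)^j (α choose j)`. -/
noncomputable def onePowRat (m : ℕ) (α : ℚ) : PowerSeries ℚ :=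
  PowerSeries.mk fun n => if m ∣ n then (-1 : ℚ) ^ (n / m) * qchoose α (n / m) else 0

/-- The cycle product of the element `(g,s) ∈ G ≀ Sₙ` corresponding to the cycle
`(i, s(i), …, s^{r-1}(i))` of `s` through `i` (of length `r`, the minimal period of `i`),
computed with starting point `i`: `g_{s^{r-1}(i)} ⋯ g_{s(i)} g_i`. -/
noncomputable def cycleProd {G : Type*} [Group G] {n : ℕ} (g : Fin n → G)
    (s : Equiv.Perm (Fin n)) (i : Fin n) : G :=
  (((List.range (Function.minimalPeriod (⇑s) i)).map fun j => g ((s ^ j) i)).reverse).prod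

/-- `m_r(c)`, the number of `r`-cycles of `s` (fixed points counted as `1`-cycles) whose
cycle product lies in the conjugacy class of `c`: each such cycle consists of exactly `r`
points `i` with minimal period `r` and cycle product (computed from the starting point `i`)
conjugate to `c`. -/
noncomputable def mCount {G : Type*} [Group G] {n : ℕ} (g : Fin n → G)
    (s : Equiv.Perm (Fin n)) (r : ℕ) (c : G) : ℕ :=
  Nat.card {i : Fin n // Function.minimalPeriod (⇑s) i = r ∧ IsConj (cycleProd g s i) c} / r

namespace WCC

open Function Equiv

variable {n : ℕ} (s : Equiv.Perm (Fin n))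

/-- minimal period of `i` under `s`. -/
noncomputable def per (i : Fin n) : ℕ := Function.minimalPeriod (⇑s) i

lemma per_def (i : Fin n) : per s i = Function.minimalPeriod (⇑s) i := rfl

lemma mem_pp (i : Fin n) : i ∈ Function.periodicPts (⇑s) := by
  refine Function.mem_periodicPts.2 ⟨orderOf s, orderOf_pos s, ?_⟩
  show (⇑s)^[orderOf s] i = i
  rw [Equiv.Perm.iterate_eq_pow, pow_orderOf_eq_one]; rfl

lemma per_pos (i : Fin n) : 0 < per s i :=
  Function.minimalPeriod_pos_of_mem_periodicPts (mem_pp s i)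

lemma pow_per (i : Fin n) : (s ^ per s i) i = i :=
  Function.iterate_minimalPeriod (f := ⇑s) (x := i)

lemma pow_mod_per (i : Fin n) (m : ℕ) : (s ^ (m % per s i)) i = (s ^ m) i := by
  exact Function.iterate_mod_minimalPeriod_eq (f := ⇑s) (x := i) (n := m)

lemma per_pow_apply (i : Fin n) (m : ℕ) : per s ((s ^ m) i) = per s i := by
  exact Function.minimalPeriod_apply_iterate (f := ⇑s) (x := i) (mem_pp s i) m

open scoped Classical in
/-- canonical representative (minimum) of the `s`-cycle of `i`. -/
noncomputable def rep (i : Fin n) : Fin n :=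
  (Finset.univ.filter fun j => s.SameCycle i j).min'
    ⟨i, by simp [Equiv.Perm.SameCycle.refl]⟩

lemma sameCycle_rep (i : Fin n) : s.SameCycle i (rep s i) := by
  classical
  have := Finset.min'_mem (Finset.univ.filter fun j => s.SameCycle i j)
    ⟨i, by simp [Equiv.Perm.SameCycle.refl]⟩
  simpa [rep] using this

lemma rep_eq_of_sameCycle {i j : Fin n} (h : s.SameCycle i j) : rep s i = rep s j := by
  classical
  have : (Finset.univ.filter fun k => s.SameCycle i k)
      = (Finset.univ.filter fun k => s.SameCycle j k) := by
    ext k; simp only [Finset.mem_filter, Finset.mem_univ, true_and]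
    exact ⟨fun h' => h.symm.trans h', fun h' => h.trans h'⟩
  simp [rep, this]

lemma rep_pow_apply (i : Fin n) (m : ℕ) : rep s ((s ^ m) i) = rep s i :=
  (rep_eq_of_sameCycle s ⟨m, rfl⟩).symm

lemma rep_apply (i : Fin n) : rep s (s i) = rep s i := by
  simpa using rep_pow_apply s i 1

lemma rep_rep (i : Fin n) : rep s (rep s i) = rep s i :=
  (rep_eq_of_sameCycle s (sameCycle_rep s i)).symm

lemma per_eq_of_sameCycle {i j : Fin n} (h : s.SameCycle i j) : per s i = per s j := by
  obtain ⟨m, -, rfl⟩ := h.exists_pow_eq'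
  exact (per_pow_apply s i m).symm

lemma per_rep (i : Fin n) : per s (rep s i) = per s i :=
  (per_eq_of_sameCycle s (sameCycle_rep s i)).symm

lemma exists_pow_rep (i : Fin n) : ∃ k : ℕ, (s ^ k) (rep s i) = i := by
  obtain ⟨m, -, hm⟩ := (sameCycle_rep s i).symm.exists_pow_eq'
  exact ⟨m, hm⟩

open scoped Classical in
/-- index of `i` in its cycle, relative to the representative. -/
noncomputable def idx (i : Fin n) : ℕ := Nat.find (exists_pow_rep s i)

lemma pow_idx_rep (i : Fin n) : (s ^ idx s i) (rep s i) = i := Nat.find_spec (exists_pow_rep s i)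

lemma idx_lt (i : Fin n) : idx s i < per s i := by
  classical
  by_contra h
  push_neg at h
  have hp : 0 < per s i := per_pos s i
  have hmod : (s ^ (idx s i % per s i)) (rep s i) = i := by
    rw [← per_rep s i] at *
    rw [pow_mod_per s (rep s i) (idx s i), pow_idx_rep]
  have hlt : idx s i % per s i < idx s i := lt_of_lt_of_le (Nat.mod_lt _ hp) h
  exact Nat.find_min (exists_pow_rep s i) hlt hmod

lemma idx_unique {i : Fin n} {k : ℕ} (hk : k < per s i) (h : (s ^ k) (rep s i) = i) :
    k = idx s i := by
  classical
  have h2 : (s ^ idx s i) (rep s i) = i := pow_idx_rep s i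
  have inj := Function.iterate_injOn_Iio_minimalPeriod (f := ⇑s) (x := rep s i)
  have hper : Function.minimalPeriod (⇑s) (rep s i) = per s i := per_rep s i
  refine inj ?_ ?_ ?_
  · show k ∈ Set.Iio _; rw [hper]; exact hk
  · show idx s i ∈ Set.Iio _; rw [hper]; exact (idx_lt s i)
  · show (⇑s)^[k] (rep s i) = (⇑s)^[idx s i] (rep s i)
    rw [Equiv.Perm.iterate_eq_pow, Equiv.Perm.iterate_eq_pow, h, h2]

lemma idx_rep (i : Fin n) : idx s (rep s i) = 0 := by
  have : (0 : ℕ) = idx s (rep s i) := by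
    refine idx_unique s ?_ ?_
    · rw [per_rep]; exact per_pos s _
    · rw [rep_rep]; rfl
  omega

lemma idx_pow_of_rep {b : Fin n} (hb : rep s b = b) {m : ℕ} (hm : m < per s b) :
    idx s ((s ^ m) b) = m := by
  refine (idx_unique s ?_ ?_).symm
  · rwa [per_pow_apply]
  · rw [rep_pow_apply, hb]

lemma rep_self_of_pow {b : Fin n} (hb : rep s b = b) (m : ℕ) : rep s ((s ^ m) b) = b := by
  rw [rep_pow_apply, hb]

variable {G : Type*} [Group G] (g : Fin n → G)

/-- partial product `g(s^{m-1} c) ⋯ g(s c) g(c)`. -/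
noncomputable def pprod (c : Fin n) : ℕ → G
  | 0 => 1
  | (j+1) => g ((s ^ j) c) * pprod c j

@[simp] lemma pprod_zero (c : Fin n) : pprod s g c 0 = 1 := rfl

lemma pprod_succ (c : Fin n) (j : ℕ) :
    pprod s g c (j + 1) = g ((s ^ j) c) * pprod s g c j := rfl

lemma pprod_eq_list (c : Fin n) (m : ℕ) :
    pprod s g c m = (((List.range m).map fun j => g ((s ^ j) c)).reverse).prod := by
  induction m with
  | zero => simp
  | succ m ih => rw [List.range_succ]; simp [pprod_succ, ih]

lemma cycleProd_eq_pprod (i : Fin n) : cycleProd g s i = pprod s g i (per s i) := by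
  rw [pprod_eq_list]; rfl

lemma pprod_shift (c : Fin n) (m : ℕ) :
    pprod s g (s c) m = g ((s ^ m) c) * pprod s g c m * (g c)⁻¹ := by
  induction m with
  | zero => simp
  | succ m ih =>
      rw [pprod_succ, ih, pprod_succ]
      have h1 : (s ^ m) (s c) = (s ^ (m + 1)) c := by
        rw [pow_succ]; rfl
      rw [h1]
      group

lemma cycleProd_apply_isConj (c : Fin n) :
    IsConj (cycleProd g s c) (cycleProd g s (s c)) := by
  have hper : per s (s c) = per s c := by simpa using per_pow_apply s c 1
  rw [cycleProd_eq_pprod, cycleProd_eq_pprod, hper, pprod_shift, pow_per]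
  exact isConj_iff.2 ⟨g c, rfl⟩

lemma cycleProd_pow_isConj (c : Fin n) (m : ℕ) :
    IsConj (cycleProd g s c) (cycleProd g s ((s ^ m) c)) := by
  induction m with
  | zero => simpa using IsConj.refl (cycleProd g s c)
  | succ m ih =>
      have : (s ^ (m + 1)) c = s ((s ^ m) c) := by rw [pow_succ']; rfl
      rw [this]
      exact ih.trans (cycleProd_apply_isConj s g ((s ^ m) c))

lemma cycleProd_rep_isConj (i : Fin n) :
    IsConj (cycleProd g s (rep s i)) (cycleProd g s i) := by
  have := cycleProd_pow_isConj s g (rep s i) (idx s i)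
  rwa [pow_idx_rep] at this

/-- the number of points of period `r` and class `c` is `r` times the number of cycles. -/
lemma card_points_eq (r : ℕ) (c : G) :
    Nat.card {i : Fin n // per s i = r ∧ IsConj (cycleProd g s i) c}
      = r * Nat.card {b : {b : Fin n // rep s b = b} //
          per s b.val = r ∧ IsConj (cycleProd g s b.val) c} := by
  classical
  have e : {i : Fin n // per s i = r ∧ IsConj (cycleProd g s i) c}
      ≃ ({b : {b : Fin n // rep s b = b} //
          per s b.val = r ∧ IsConj (cycleProd g s b.val) c} × Fin r) :=
    { toFun := fun i => (⟨⟨rep s i.val, rep_rep s i.val⟩,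
        ⟨(per_rep s i.val).trans i.prop.1,
          ((cycleProd_rep_isConj s g i.val).trans i.prop.2)⟩⟩,
        ⟨idx s i.val, by have h := idx_lt s i.val; rw [i.prop.1] at h; exact h⟩)
      invFun := fun p => ⟨(s ^ (p.2 : ℕ)) p.1.val.val,
        by rw [per_pow_apply]; exact p.1.prop.1,
        ((cycleProd_pow_isConj s g p.1.val.val (p.2 : ℕ)).symm.trans p.1.prop.2)⟩
      left_inv := fun i => Subtype.ext (pow_idx_rep s i.val)
      right_inv := fun p => by
        have hb := p.1.val.prop
        have hper : (p.2 : ℕ) < per s p.1.val.val := by rw [p.1.prop.1]; exact p.2.isLt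
        refine Prod.ext ?_ ?_
        · exact Subtype.ext (Subtype.ext (rep_self_of_pow s hb (p.2 : ℕ)))
        · exact Fin.ext (idx_pow_of_rep s hb hper) }
  rw [Nat.card_congr e, Nat.card_prod, Nat.card_eq_fintype_card (α := Fin r), Fintype.card_fin,
    mul_comm]

/-! utilities -/

lemma pow_add_apply (s : Equiv.Perm (Fin n)) (a b : ℕ) (i : Fin n) :
    (s ^ (a + b)) i = (s ^ a) ((s ^ b) i) := by rw [pow_add]; rfl

lemma apply_pow_succ (s : Equiv.Perm (Fin n)) (m : ℕ) (i : Fin n) :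
    s ((s ^ m) i) = (s ^ (m + 1)) i := by rw [pow_succ']; rfl

lemma pow_apply_congr (s : Equiv.Perm (Fin n)) {i : Fin n} {a b : ℕ}
    (h : a % per s i = b % per s i) : (s ^ a) i = (s ^ b) i := by
  rw [← pow_mod_per s i a, ← pow_mod_per s i b, h]

lemma per_le (s : Equiv.Perm (Fin n)) (i : Fin n) : per s i ≤ n := by
  classical
  have h := Finset.card_le_card_of_injOn (s := Finset.range (per s i)) (t := Finset.univ)
    (fun m => (s ^ m) i) (fun _ _ => Finset.mem_univ _) ?_
  · simpa using h
  · intro x hx y hy hxy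
    refine Function.iterate_injOn_Iio_minimalPeriod (f := ⇑s) (x := i) ?_ ?_ ?_
    · simpa [per_def] using hx
    · simpa [per_def] using hy
    · simp only [Equiv.Perm.iterate_eq_pow]; exact hxy

lemma idx_pow_mod (s : Equiv.Perm (Fin n)) {b : Fin n} (hb : rep s b = b) (m : ℕ) :
    idx s ((s ^ m) b) = m % per s b := by
  have h1 : (s ^ (m % per s b)) b = (s ^ m) b := pow_mod_per s b m
  rw [← h1]
  exact idx_pow_of_rep s hb (Nat.mod_lt _ (per_pos s b))

lemma symm_pow_apply (s : Equiv.Perm (Fin n)) (m : ℕ) (i : Fin n) :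
    s.symm ((s ^ m) i) = (s ^ (m + per s i - 1)) i := by
  refine s.injective ?_
  rw [Equiv.apply_symm_apply, apply_pow_succ]
  have h1 : m + per s i - 1 + 1 = m + per s i := by have := per_pos s i; omega
  rw [h1, pow_add_apply, pow_per]

lemma mod_aux {r : ℕ} (x A B : ℕ) (hAB : A + B = r) : ((x % r + A) % r + B) % r = x % r := by
  rw [Nat.mod_add_mod, Nat.add_assoc, hAB, Nat.add_mod_right, Nat.mod_mod_of_dvd _ dvd_rfl]

variable {G : Type*} [Group G]

lemma card_sol {x y : G} (hxy : IsConj x y) :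
    Nat.card {u : G // x * u = u * y}
      = Nat.card (Subgroup.centralizer ({x} : Set G)) := by
  obtain ⟨w, hw⟩ := isConj_iff.1 hxy
  have hw' : w * x = y * w := by rw [← hw]; group
  have hw0 : x * w⁻¹ = w⁻¹ * y := by rw [← hw]; group
  refine Nat.card_congr ?_
  refine { toFun := fun u => ⟨u.val * w, ?_⟩
           invFun := fun v => ⟨v.val * w⁻¹, ?_⟩
           left_inv := fun u => by ext; simp
           right_inv := fun v => by ext; simp }
  · rw [Subgroup.mem_centralizer_iff]
    rintro z rfl
    calc z * (u.val * w) = (z * u.val) * w := by rw [mul_assoc]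
    _ = u.val * (y * w) := by rw [u.prop, mul_assoc]
    _ = u.val * (w * z) := by rw [hw']
    _ = (u.val * w) * z := by rw [mul_assoc]
  · have hv : x * v.val = v.val * x := (Subgroup.mem_centralizer_iff.1 v.prop) x rfl
    calc x * (v.val * w⁻¹) = (x * v.val) * w⁻¹ := by rw [mul_assoc]
    _ = v.val * (x * w⁻¹) := by rw [hv, mul_assoc]
    _ = v.val * w⁻¹ * y := by rw [hw0, mul_assoc]

lemma card_centralizer_conj {x y : G} (h : IsConj x y) :
    Nat.card (Subgroup.centralizer ({x} : Set G))
      = Nat.card (Subgroup.centralizer ({y} : Set G)) := by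
  obtain ⟨w, hw⟩ := isConj_iff.1 h
  refine Nat.card_congr ?_
  have mem : ∀ (w : G) (x : G) (v : G), v ∈ Subgroup.centralizer ({x} : Set G) →
      w * v * w⁻¹ ∈ Subgroup.centralizer ({w * x * w⁻¹} : Set G) := by
    intro w x v hv
    rw [Subgroup.mem_centralizer_iff]
    rintro z rfl
    have hv' : x * v = v * x := (Subgroup.mem_centralizer_iff.1 hv) x rfl
    calc (w * x * w⁻¹) * (w * v * w⁻¹) = w * (x * v) * w⁻¹ := by group
    _ = w * (v * x) * w⁻¹ := by rw [hv']
    _ = (w * v * w⁻¹) * (w * x * w⁻¹) := by group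
  refine { toFun := fun v => ⟨w * v.val * w⁻¹, hw ▸ mem w x v.val v.prop⟩
           invFun := fun v => ⟨w⁻¹ * v.val * w, ?_⟩
           left_inv := fun v => by ext; group
           right_inv := fun v => by ext; group }
  have h2 := mem w⁻¹ y v.val v.prop
  rw [inv_inv] at h2
  have h3 : w⁻¹ * y * w = x := by rw [← hw]; group
  rwa [h3] at h2

lemma quot_mk_eq_iff (x y : G) :
    (Quot.mk IsConj x = Quot.mk IsConj y) ↔ IsConj x y := by
  rw [Quot.eq]
  constructor
  · intro h
    induction h with
    | rel a b hab => exact hab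
    | refl a => exact IsConj.refl a
    | symm a b _ ih => exact ih.symm
    | trans a b c _ _ ih1 ih2 => exact ih1.trans ih2
  · exact Relation.EqvGen.rel x y

lemma isConj_out (q : Quot (IsConj (α := G))) (x : G) :
    IsConj x q.out ↔ Quot.mk IsConj x = q := by
  conv_rhs => rw [← Quot.out_eq q]
  exact (quot_mk_eq_iff x q.out).symm

/-! ## commuting permutation lemmas -/

abbrev Reps {n : ℕ} (s : Equiv.Perm (Fin n)) := {b : Fin n // rep s b = b}

noncomputable def rp {n : ℕ} (s : Equiv.Perm (Fin n)) (i : Fin n) : Reps s :=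
  ⟨rep s i, rep_rep s i⟩

section Comm

variable {n : ℕ} {s t : Equiv.Perm (Fin n)} (hc2 : ∀ i, t (s i) = s (t i))

include hc2

lemma tpow (m : ℕ) (i : Fin n) : t ((s ^ m) i) = (s ^ m) (t i) := by
  induction m with
  | zero => simp
  | succ m ih => rw [← apply_pow_succ, hc2, ih, apply_pow_succ]

lemma tsymm_apply (i : Fin n) : t.symm (s i) = s (t.symm i) := by
  refine t.injective ?_
  rw [Equiv.apply_symm_apply, hc2, Equiv.apply_symm_apply]

lemma tsymm_pow (m : ℕ) (i : Fin n) : t.symm ((s ^ m) i) = (s ^ m) (t.symm i) :=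
  tpow (fun i => tsymm_apply hc2 i) m i

lemma per_t_le (i : Fin n) : per s (t i) ≤ per s i := by
  refine Function.IsPeriodicPt.minimalPeriod_le (per_pos s i) ?_
  show (⇑s)^[per s i] (t i) = t i
  rw [Equiv.Perm.iterate_eq_pow, ← tpow hc2, pow_per]

lemma per_t (i : Fin n) : per s (t i) = per s i := by
  refine le_antisymm (per_t_le hc2 i) ?_
  have h2 := per_t_le (fun i => tsymm_apply hc2 i) (t i)
  rwa [Equiv.symm_apply_apply] at h2

lemma sameCycle_t {x y : Fin n} (h : s.SameCycle x y) : s.SameCycle (t x) (t y) := by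
  obtain ⟨m, -, rfl⟩ := h.exists_pow_eq'
  exact ⟨(m : ℤ), by rw [zpow_natCast, tpow hc2]⟩

end Comm

section Cent

variable {n : ℕ} {G : Type*} [Group G] {g h : Fin n → G} {s t : Equiv.Perm (Fin n)}
variable (hc1 : ∀ i, h i * g (t.symm i) = g i * h (s.symm i))
variable (hc2 : ∀ i, t (s i) = s (t i))

include hc1 hc2

/-- the key structure formula for a centralizing element. -/
lemma cent_formula (b : Fin n) (j : ℕ) :
    h ((s ^ j) b) = pprod s g (s b) j * h b * (pprod s g (s (t.symm b)) j)⁻¹ := by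
  induction j with
  | zero => simp
  | succ j ih =>
      have key := hc1 ((s ^ (j + 1)) b)
      rw [tsymm_pow hc2] at key
      have h2 : s.symm ((s ^ (j + 1)) b) = (s ^ j) b := by
        rw [← apply_pow_succ, Equiv.symm_apply_apply]
      rw [h2, ih] at key
      have h3 : h ((s ^ (j+1)) b)
          = g ((s ^ (j+1)) b) * (pprod s g (s b) j * h b * (pprod s g (s (t.symm b)) j)⁻¹)
              * (g ((s ^ (j+1)) (t.symm b)))⁻¹ := by
        rw [← key]; group
      rw [h3, pprod_succ, pprod_succ]
      have e1 : (s ^ j) (s b) = (s ^ (j+1)) b := by rw [pow_succ]; rfl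
      have e2 : (s ^ j) (s (t.symm b)) = (s ^ (j+1)) (t.symm b) := by rw [pow_succ]; rfl
      rw [e1, e2]
      group

lemma cent_wrap (b : Fin n) :
    pprod s g (s b) (per s b) * h b = h b * pprod s g (s (t.symm b)) (per s b) := by
  have e := cent_formula hc1 hc2 b (per s b)
  rw [pow_per] at e
  conv_rhs => rw [e]
  group

omit hc1 in
/-- where a centralizing element sends a representative point. -/
lemma t_rep (b : Fin n) (hb : rep s b = b) :
    t b = (s ^ (per s b - idx s (t.symm (rep s (t b))))) (rep s (t b)) := by
  set c := rep s (t b) with hc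
  set K := idx s (t.symm c) with hK
  have hbc : rep s (t.symm c) = b := by
    have h1 : s.SameCycle (t b) c := sameCycle_rep s (t b)
    have h2 : s.SameCycle b (t.symm c) := by
      have := sameCycle_t (fun i => tsymm_apply hc2 i) h1
      rwa [Equiv.symm_apply_apply] at this
    rw [← rep_eq_of_sameCycle s h2, hb]
  have h3 : (s ^ K) b = t.symm c := by rw [← hbc]; exact pow_idx_rep s (t.symm c)
  have h4 : (s ^ K) (t b) = c := by
    rw [← tpow hc2, h3, Equiv.apply_symm_apply]
  have hperc : per s c = per s b := by
    rw [hc, per_rep, per_t hc2]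
  have hKle : K ≤ per s b := by
    have h5 : K < per s (t.symm c) := idx_lt s (t.symm c)
    have h6 : per s (t.symm c) = per s b := by rw [← hbc, per_rep]
    omega
  refine (Equiv.injective (s ^ K)) ?_
  rw [h4, ← pow_add_apply]
  have h7 : K + (per s b - K) = per s b := by omega
  rw [h7, ← hperc, pow_per]

end Cent

/-! ## reconstruction of a centralizing element from data -/

section Recon

variable {n : ℕ} {G : Type*} [Group G] (g : Fin n → G) (s : Equiv.Perm (Fin n))
variable (σ : Equiv.Perm (Reps s)) (k : Reps s → ℕ) (u : Reps s → G)

lemma rp_pow (b : Reps s) (m : ℕ) : rp s ((s ^ m) b.val) = b :=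
  Subtype.ext (rep_self_of_pow s b.prop m)

lemma rp_self (b : Reps s) : rp s b.val = b := Subtype.ext b.prop

lemma rp_coe (i : Fin n) : ((rp s i) : Fin n) = rep s i := rfl

noncomputable def tinvFun (i : Fin n) : Fin n :=
  (s ^ (idx s i + k (rp s i))) ((σ (rp s i)) : Fin n)

noncomputable def tFun (i : Fin n) : Fin n :=
  (s ^ (idx s i + (per s i - k (σ.symm (rp s i))))) ((σ.symm (rp s i)) : Fin n)

lemma tinvFun_eval (b : Reps s) (m : ℕ) :
    tinvFun s σ k ((s ^ m) b.val) = (s ^ (m % per s b.val + k b)) ((σ b) : Fin n) := by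
  unfold tinvFun
  rw [rp_pow, idx_pow_mod s b.prop]

lemma tFun_eval (b : Reps s) (m : ℕ) :
    tFun s σ k ((s ^ m) b.val)
      = (s ^ (m % per s b.val + (per s b.val - k (σ.symm b)))) ((σ.symm b) : Fin n) := by
  unfold tFun
  rw [rp_pow, idx_pow_mod s b.prop, per_pow_apply]

variable (hσ : ∀ b : Reps s, per s ((σ b) : Fin n) = per s (b : Fin n))
variable (hk : ∀ b : Reps s, k b < per s (b : Fin n))

include hσ in
lemma per_symm_σ (b : Reps s) : per s ((σ.symm b) : Fin n) = per s (b : Fin n) := by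
  have := hσ (σ.symm b)
  rw [Equiv.apply_symm_apply] at this
  omega

include hσ hk in
lemma tinv_tF (i : Fin n) : tinvFun s σ k (tFun s σ k i) = i := by
  suffices H : ∀ (b : Reps s) (m : ℕ),
      tinvFun s σ k (tFun s σ k ((s ^ m) b.val)) = (s ^ m) b.val by
    have := H (rp s i) (idx s i)
    rwa [rp_coe, pow_idx_rep] at this
  intro b m
  rw [tFun_eval, tinvFun_eval (b := σ.symm b)]
  rw [Equiv.apply_symm_apply, per_symm_σ s σ hσ]
  refine pow_apply_congr s ?_
  have hK : k (σ.symm b) ≤ per s (b : Fin n) := by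
    have := hk (σ.symm b); rw [per_symm_σ s σ hσ] at this; omega
  exact mod_aux m _ _ (by omega)

include hσ hk in
lemma tF_tinv (i : Fin n) : tFun s σ k (tinvFun s σ k i) = i := by
  suffices H : ∀ (b : Reps s) (m : ℕ),
      tFun s σ k (tinvFun s σ k ((s ^ m) b.val)) = (s ^ m) b.val by
    have := H (rp s i) (idx s i)
    rwa [rp_coe, pow_idx_rep] at this
  intro b m
  rw [tinvFun_eval, tFun_eval (b := σ b)]
  rw [Equiv.symm_apply_apply, hσ b]
  refine pow_apply_congr s ?_
  have hK : k b ≤ per s (b : Fin n) := by have := hk b; omega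
  exact mod_aux m _ _ (by omega)

/-- the permutation part reconstructed from the data. -/
noncomputable def tPerm : Equiv.Perm (Fin n) :=
  ⟨tFun s σ k, tinvFun s σ k, tinv_tF s σ k hσ hk, tF_tinv s σ k hσ hk⟩

lemma tPerm_symm_apply (i : Fin n) :
    (tPerm s σ k hσ hk).symm i = tinvFun s σ k i := rfl

lemma tPerm_apply (i : Fin n) : tPerm s σ k hσ hk i = tFun s σ k i := rfl

include hσ hk in
lemma recon_c2 (i : Fin n) :
    tPerm s σ k hσ hk (s i) = s (tPerm s σ k hσ hk i) := by
  suffices H : ∀ (b : Reps s) (m : ℕ),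
      tFun s σ k (s ((s ^ m) b.val)) = s (tFun s σ k ((s ^ m) b.val)) by
    have := H (rp s i) (idx s i)
    rwa [rp_coe, pow_idx_rep] at this
  intro b m
  rw [apply_pow_succ, tFun_eval, tFun_eval, apply_pow_succ]
  refine pow_apply_congr s ?_
  rw [per_symm_σ s σ hσ]
  set r := per s (b : Fin n) with hr
  set K := k (σ.symm b) with hK
  have h1 : ((m + 1) % r + (r - K)) % r = ((m + 1) + (r - K)) % r := Nat.mod_add_mod _ _ _
  have h2 : (m % r + (r - K) + 1) % r = (m + (r - K + 1)) % r := by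
    rw [Nat.add_assoc, Nat.mod_add_mod]
  rw [h1, h2]
  congr 1
  omega

/-- the `Gⁿ` part reconstructed from the data. -/
noncomputable def hFun (i : Fin n) : G :=
  pprod s g (s (rep s i)) (idx s i) * u (rp s i)
    * (pprod s g ((s ^ (k (rp s i) + 1)) ((σ (rp s i)) : Fin n)) (idx s i))⁻¹

lemma hFun_eval (b : Reps s) (m : ℕ) (hm : m < per s (b : Fin n)) :
    hFun g s σ k u ((s ^ m) b.val)
      = pprod s g (s b.val) m * u b
          * (pprod s g ((s ^ (k b + 1)) ((σ b) : Fin n)) m)⁻¹ := by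
  unfold hFun
  rw [rp_pow, idx_pow_mod s b.prop, Nat.mod_eq_of_lt hm, rep_self_of_pow s b.prop]

variable (hu : ∀ b : Reps s, pprod s g (s (b : Fin n)) (per s (b : Fin n)) * u b
    = u b * pprod s g ((s ^ (k b + 1)) ((σ b) : Fin n)) (per s (b : Fin n)))

include hσ hk hu in
lemma recon_c1 (i : Fin n) :
    hFun g s σ k u i * g ((tPerm s σ k hσ hk).symm i)
      = g i * hFun g s σ k u (s.symm i) := by
  suffices H : ∀ (b : Reps s) (m : ℕ), m < per s (b : Fin n) →
      hFun g s σ k u ((s ^ m) b.val) * g (tinvFun s σ k ((s ^ m) b.val))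
        = g ((s ^ m) b.val) * hFun g s σ k u (s.symm ((s ^ m) b.val)) by
    have := H (rp s i) (idx s i) (by rw [rp_coe, per_rep]; exact idx_lt s i)
    rw [rp_coe, pow_idx_rep] at this
    rw [tPerm_symm_apply]
    exact this
  intro b m hm
  have hrpos : 0 < per s (b : Fin n) := per_pos s _
  rw [tinvFun_eval, Nat.mod_eq_of_lt hm, symm_pow_apply]
  match m, hm with
  | 0, hm =>
    have h0 : 0 + per s (b : Fin n) - 1 = per s (b : Fin n) - 1 := by omega
    rw [h0, hFun_eval g s σ k u b 0 hrpos, hFun_eval g s σ k u b _ (by omega)]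
    simp only [pprod_zero, mul_one, inv_one, one_mul, Nat.zero_add]
    have key := hu b
    have hr1 : per s (b : Fin n) = (per s (b : Fin n) - 1) + 1 := by omega
    rw [hr1, pprod_succ, pprod_succ] at key
    have e3 : (s ^ (per s (b : Fin n) - 1)) (s (b : Fin n)) = (b : Fin n) := by
      have h4 : (s ^ (per s (b : Fin n) - 1)) (s (b : Fin n))
          = (s ^ ((per s (b : Fin n) - 1) + 1)) (b : Fin n) := by rw [pow_succ]; rfl
      rw [h4, ← hr1, pow_per]
    have e4 : (s ^ (per s (b : Fin n) - 1)) ((s ^ (k b + 1)) ((σ b) : Fin n))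
        = (s ^ (k b)) ((σ b) : Fin n) := by
      rw [← pow_add_apply]
      have h5 : per s (b : Fin n) - 1 + (k b + 1) = k b + per s (b : Fin n) := by omega
      rw [h5, pow_add_apply]
      congr 1
      rw [← hσ b, pow_per]
    rw [e3, e4] at key
    calc u b * g ((s ^ (k b)) ((σ b) : Fin n))
        = u b * (g ((s ^ (k b)) ((σ b) : Fin n))
              * pprod s g ((s ^ (k b + 1)) ((σ b) : Fin n)) (per s (b : Fin n) - 1))
            * (pprod s g ((s ^ (k b + 1)) ((σ b) : Fin n)) (per s (b : Fin n) - 1))⁻¹ := by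
          group
      _ = g (b : Fin n) * pprod s g (s (b : Fin n)) (per s (b : Fin n) - 1) * u b
            * (pprod s g ((s ^ (k b + 1)) ((σ b) : Fin n)) (per s (b : Fin n) - 1))⁻¹ := by
          rw [← key]
      _ = g ((s ^ (0 : ℕ)) (b : Fin n))
            * (pprod s g (s (b : Fin n)) (per s (b : Fin n) - 1) * u b
                * (pprod s g ((s ^ (k b + 1)) ((σ b) : Fin n)) (per s (b : Fin n) - 1))⁻¹) := by
          rw [pow_zero, Equiv.Perm.one_apply]; group
  | (m' + 1), hm =>
    have e6 : m' + 1 + per s (b : Fin n) - 1 = m' + per s (b : Fin n) := by omega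
    rw [e6]
    have e7 : (s ^ (m' + per s (b : Fin n))) (b : Fin n) = (s ^ m') (b : Fin n) := by
      rw [pow_add_apply, pow_per]
    rw [e7, hFun_eval g s σ k u b (m' + 1) hm, hFun_eval g s σ k u b m' (by omega)]
    rw [pprod_succ, pprod_succ]
    have e8 : (s ^ m') (s (b : Fin n)) = (s ^ (m' + 1)) (b : Fin n) := by rw [pow_succ]; rfl
    have e9 : (s ^ m') ((s ^ (k b + 1)) ((σ b) : Fin n))
        = (s ^ (m' + 1 + k b)) ((σ b) : Fin n) := by
      rw [← pow_add_apply]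
      have : m' + (k b + 1) = m' + 1 + k b := by omega
      rw [this]
    rw [e8, e9]
    group

end Recon

/-! ## the main bijection -/

section Main

variable {n : ℕ} {G : Type*} [Group G] (g : Fin n → G) (s : Equiv.Perm (Fin n))

lemma comm_iff (h : Fin n → G) (t : Equiv.Perm (Fin n)) :
    ((⟨h, t⟩ : WreathProduct G n) * ⟨g, s⟩ = (⟨g, s⟩ : WreathProduct G n) * ⟨h, t⟩)
      ↔ ((∀ i, h i * g (t.symm i) = g i * h (s.symm i)) ∧ ∀ i, t (s i) = s (t i)) := by
  constructor
  · intro e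
    constructor
    · intro i
      have h1 := congrFun (congrArg SemidirectProduct.left e) i
      exact h1
    · intro i
      have h2 := congrArg SemidirectProduct.right e
      have h3 := congrFun (congrArg (fun (p : Equiv.Perm (Fin n)) => (p : Fin n → Fin n)) h2) i
      simpa [Equiv.Perm.mul_apply] using h3
  · rintro ⟨e1, e2⟩
    refine SemidirectProduct.ext ?_ ?_
    · funext i
      exact e1 i
    · exact Equiv.ext fun i => by simpa [Equiv.Perm.mul_apply] using e2 i

/-- the data condition. -/
def Cond (d : Equiv.Perm (Reps s) × ((Reps s → ℕ) × (Reps s → G))) : Prop :=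
  (∀ b : Reps s, per s ((d.1 b) : Fin n) = per s (b : Fin n)) ∧
  (∀ b : Reps s, d.2.1 b < per s (b : Fin n)) ∧
  (∀ b : Reps s, pprod s g (s (b : Fin n)) (per s (b : Fin n)) * d.2.2 b
      = d.2.2 b * pprod s g ((s ^ (d.2.1 b + 1)) ((d.1 b) : Fin n)) (per s (b : Fin n)))

/-- the cycle permutation induced by a permutation commuting with `s`. -/
noncomputable def sigmaOf {t : Equiv.Perm (Fin n)} (hc2 : ∀ i, t (s i) = s (t i)) :
    Equiv.Perm (Reps s) where
  toFun b := rp s (t.symm b.val)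
  invFun b := rp s (t b.val)
  left_inv b := by
    refine Subtype.ext ?_
    show rep s (t (rep s (t.symm b.val))) = b.val
    have h1 := sameCycle_t hc2 (sameCycle_rep s (t.symm b.val))
    rw [Equiv.apply_symm_apply] at h1
    rw [← rep_eq_of_sameCycle s h1, b.prop]
  right_inv b := by
    refine Subtype.ext ?_
    show rep s (t.symm (rep s (t b.val))) = b.val
    have h1 := sameCycle_t (fun i => tsymm_apply hc2 i) (sameCycle_rep s (t b.val))
    rw [Equiv.symm_apply_apply] at h1
    rw [← rep_eq_of_sameCycle s h1, b.prop]

lemma card_cent_eq :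
    Nat.card {x : WreathProduct G n // x * ⟨g, s⟩ = (⟨g, s⟩ : WreathProduct G n) * x}
      = Nat.card {d : Equiv.Perm (Reps s) × ((Reps s → ℕ) × (Reps s → G)) // Cond g s d} := by
  refine Nat.card_congr ?_
  refine
    { toFun := fun x =>
        ⟨(sigmaOf s ((comm_iff g s x.val.left x.val.right).1 x.prop).2,
          fun b => idx s (x.val.right.symm b.val),
          fun b => x.val.left b.val), ?_, ?_, ?_⟩
      invFun := fun d =>
        ⟨⟨hFun g s d.val.1 d.val.2.1 d.val.2.2,
            tPerm s d.val.1 d.val.2.1 d.prop.1 d.prop.2.1⟩,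
          (comm_iff g s _ _).2
            ⟨recon_c1 g s d.val.1 d.val.2.1 d.val.2.2 d.prop.1 d.prop.2.1 d.prop.2.2,
             recon_c2 s d.val.1 d.val.2.1 d.prop.1 d.prop.2.1⟩⟩
      left_inv := fun x => ?_
      right_inv := fun d => ?_ }
  · -- forward map cond 1
    have hc2 := ((comm_iff g s x.val.left x.val.right).1 x.prop).2
    intro b
    show per s (rep s (x.val.right.symm b.val)) = per s b.val
    rw [per_rep, per_t (fun i => tsymm_apply hc2 i)]
  · -- forward map cond 2
    have hc2 := ((comm_iff g s x.val.left x.val.right).1 x.prop).2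
    intro b
    have h1 := idx_lt s (x.val.right.symm b.val)
    rwa [per_t (fun i => tsymm_apply hc2 i)] at h1
  · -- forward map cond 3
    obtain ⟨hc1, hc2⟩ := (comm_iff g s x.val.left x.val.right).1 x.prop
    intro b
    have key := cent_wrap hc1 hc2 b.val
    have e : s (x.val.right.symm b.val)
        = (s ^ (idx s (x.val.right.symm b.val) + 1))
            (rep s (x.val.right.symm b.val)) := by
      conv_lhs => rw [← pow_idx_rep s (x.val.right.symm b.val)]
      rw [apply_pow_succ]
    rw [e] at key
    exact key
  · -- left inverse
    obtain ⟨hc1, hc2⟩ := (comm_iff g s x.val.left x.val.right).1 x.prop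
    refine Subtype.ext (SemidirectProduct.ext ?_ ?_)
    · funext i
      show pprod s g (s (rep s i)) (idx s i) * x.val.left (rep s i)
          * (pprod s g
              ((s ^ (idx s (x.val.right.symm (rep s i)) + 1))
                (rep s (x.val.right.symm (rep s i)))) (idx s i))⁻¹
        = x.val.left i
      have e : (s ^ (idx s (x.val.right.symm (rep s i)) + 1))
            (rep s (x.val.right.symm (rep s i))) = s (x.val.right.symm (rep s i)) := by
        rw [← apply_pow_succ, pow_idx_rep]
      rw [e]
      conv_rhs => rw [← pow_idx_rep s i, cent_formula hc1 hc2 (rep s i) (idx s i)]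
    · refine Equiv.ext fun i => ?_
      show (s ^ (idx s i + (per s i - idx s (x.val.right.symm (rep s (x.val.right (rep s i)))))))
          (rep s (x.val.right (rep s i))) = x.val.right i
      conv_rhs => rw [← pow_idx_rep s i, tpow hc2,
        t_rep hc2 (rep s i) (rep_rep s i), ← pow_add_apply, per_rep]
  · -- right inverse
    have e0 : ∀ b : Reps s, (s ^ (0 : ℕ)) (b : Fin n) = (b : Fin n) := by
      intro b; rw [pow_zero]; rfl
    refine Subtype.ext (Prod.ext ?_ (Prod.ext ?_ ?_))
    · refine Equiv.ext fun b => ?_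
      show rp s (tinvFun s d.val.1 d.val.2.1 (b : Fin n)) = d.val.1 b
      rw [← e0 b, tinvFun_eval, rp_pow]
    · funext b
      show idx s (tinvFun s d.val.1 d.val.2.1 (b : Fin n)) = d.val.2.1 b
      rw [← e0 b, tinvFun_eval, idx_pow_mod s (d.val.1 b).prop, Nat.zero_mod, Nat.zero_add,
        d.prop.1 b, Nat.mod_eq_of_lt (d.prop.2.1 b)]
    · funext b
      show hFun g s d.val.1 d.val.2.1 d.val.2.2 (b : Fin n) = d.val.2.2 b
      rw [← e0 b, hFun_eval g s _ _ _ b 0 (per_pos s _)]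
      simp

end Main

/-! ## counting the data -/

section Count

variable {n : ℕ} {G : Type*} [Group G] [Fintype G] (g : Fin n → G) (s : Equiv.Perm (Fin n))

omit [Fintype G] in
lemma conjP (b : Fin n) :
    IsConj (cycleProd g s b) (pprod s g (s b) (per s b)) := by
  have h1 := cycleProd_apply_isConj s g b
  have h2 : cycleProd g s (s b) = pprod s g (s b) (per s b) := by
    rw [cycleProd_eq_pprod]
    congr 1
    simpa using per_pow_apply s b 1
  rwa [h2] at h1

omit [Fintype G] in
lemma conjQ (c : Fin n) (K : ℕ) :
    IsConj (pprod s g ((s ^ (K + 1)) c) (per s c)) (cycleProd g s c) := by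
  have e1 : (s ^ (K + 1)) c = s ((s ^ K) c) := (apply_pow_succ s K c).symm
  have e2 : (s ^ per s c) ((s ^ K) c) = (s ^ K) c := by
    rw [← pow_add_apply]
    have : per s c + K = K + per s c := by omega
    rw [this, pow_add_apply, pow_per]
  have h1 : pprod s g (s ((s ^ K) c)) (per s c)
      = g ((s ^ K) c) * pprod s g ((s ^ K) c) (per s c) * (g ((s ^ K) c))⁻¹ := by
    rw [pprod_shift, e2]
  have h2 : pprod s g ((s ^ K) c) (per s c) = cycleProd g s ((s ^ K) c) := by
    rw [cycleProd_eq_pprod, per_pow_apply]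
  have h3 : IsConj (pprod s g ((s ^ (K + 1)) c) (per s c)) (cycleProd g s ((s ^ K) c)) := by
    rw [e1, h1, ← h2]
    exact isConj_iff.2 ⟨(g ((s ^ K) c))⁻¹, by group⟩
  exact h3.trans (cycleProd_pow_isConj s g c K).symm

open scoped Classical in
lemma card_data :
    Nat.card {d : Equiv.Perm (Reps s) × ((Reps s → ℕ) × (Reps s → G)) // Cond g s d}
      = Nat.card {σ : Equiv.Perm (Reps s) // ∀ b : Reps s,
            per s ((σ b) : Fin n) = per s (b : Fin n)
              ∧ IsConj (cycleProd g s ((σ b) : Fin n)) (cycleProd g s (b : Fin n))}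
        * ∏ b : Reps s,
            (per s (b : Fin n)
              * Nat.card (Subgroup.centralizer ({cycleProd g s (b : Fin n)} : Set G))) := by
  classical
  set TP := {σ : Equiv.Perm (Reps s) // ∀ b : Reps s,
      per s ((σ b) : Fin n) = per s (b : Fin n)
        ∧ IsConj (cycleProd g s ((σ b) : Fin n)) (cycleProd g s (b : Fin n))} with hTP
  have key : ∀ (σ : TP) (b : Reps s) (K : ℕ),
      IsConj (pprod s g (s (b : Fin n)) (per s (b : Fin n)))
        (pprod s g ((s ^ (K + 1)) ((σ.val b) : Fin n)) (per s (b : Fin n))) := by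
    intro σ b K
    have h1 := conjQ g s ((σ.val b) : Fin n) K
    rw [(σ.prop b).1] at h1
    exact ((conjP g s (b : Fin n)).symm.trans ((σ.prop b).2).symm).trans h1.symm
  have hconj : ∀ (d : {d : Equiv.Perm (Reps s) × ((Reps s → ℕ) × (Reps s → G)) // Cond g s d})
      (b : Reps s), per s ((d.val.1 b) : Fin n) = per s (b : Fin n)
        ∧ IsConj (cycleProd g s ((d.val.1 b) : Fin n)) (cycleProd g s (b : Fin n)) := by
    intro d b
    refine ⟨d.prop.1 b, ?_⟩
    have h3 := d.prop.2.2 b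
    have h4 : IsConj (pprod s g (s (b : Fin n)) (per s (b : Fin n)))
        (pprod s g ((s ^ (d.val.2.1 b + 1)) ((d.val.1 b) : Fin n)) (per s (b : Fin n))) :=
      isConj_iff.2 ⟨(d.val.2.2 b)⁻¹, by rw [inv_inv, mul_assoc, h3]; group⟩
    have h5 := conjQ g s ((d.val.1 b) : Fin n) (d.val.2.1 b)
    rw [d.prop.1 b] at h5
    exact (h5.symm.trans h4.symm).trans (conjP g s (b : Fin n)).symm
  have E : {d : Equiv.Perm (Reps s) × ((Reps s → ℕ) × (Reps s → G)) // Cond g s d}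
      ≃ (Σ σ : TP, Π b : Reps s, Σ K : Fin (per s (b : Fin n)),
          {v : G // pprod s g (s (b : Fin n)) (per s (b : Fin n)) * v
              = v * pprod s g ((s ^ ((K : ℕ) + 1)) ((σ.val b) : Fin n))
                  (per s (b : Fin n))}) :=
    { toFun := fun d => ⟨⟨d.val.1, fun b => hconj d b⟩,
        fun b => ⟨⟨d.val.2.1 b, d.prop.2.1 b⟩, ⟨d.val.2.2 b, d.prop.2.2 b⟩⟩⟩
      invFun := fun e => ⟨(e.1.val, fun b => ((e.2 b).1 : ℕ), fun b => ((e.2 b).2 : G)),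
        fun b => (e.1.prop b).1, fun b => (e.2 b).1.isLt, fun b => (e.2 b).2.prop⟩
      left_inv := fun d => rfl
      right_inv := fun e => rfl }
  rw [Nat.card_congr E]
  rw [Nat.card_eq_fintype_card, Fintype.card_sigma]
  have inner : ∀ (σ : TP) (b : Reps s),
      Fintype.card (Σ K : Fin (per s (b : Fin n)),
          {v : G // pprod s g (s (b : Fin n)) (per s (b : Fin n)) * v
              = v * pprod s g ((s ^ ((K : ℕ) + 1)) ((σ.val b) : Fin n))
                  (per s (b : Fin n))})
        = per s (b : Fin n)
            * Nat.card (Subgroup.centralizer ({cycleProd g s (b : Fin n)} : Set G)) := by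
    intro σ b
    rw [Fintype.card_sigma]
    have hsol : ∀ K : Fin (per s (b : Fin n)),
        Fintype.card {v : G // pprod s g (s (b : Fin n)) (per s (b : Fin n)) * v
            = v * pprod s g ((s ^ ((K : ℕ) + 1)) ((σ.val b) : Fin n)) (per s (b : Fin n))}
          = Nat.card (Subgroup.centralizer ({cycleProd g s (b : Fin n)} : Set G)) := by
      intro K
      rw [← Nat.card_eq_fintype_card, card_sol (key σ b (K : ℕ)),
        ← card_centralizer_conj (conjP g s (b : Fin n))]
    simp only [hsol, Finset.sum_const, Finset.card_univ, Fintype.card_fin, smul_eq_mul]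
  have outer : ∀ σ : TP,
      Fintype.card (Π b : Reps s, Σ K : Fin (per s (b : Fin n)),
          {v : G // pprod s g (s (b : Fin n)) (per s (b : Fin n)) * v
              = v * pprod s g ((s ^ ((K : ℕ) + 1)) ((σ.val b) : Fin n))
                  (per s (b : Fin n))})
        = ∏ b : Reps s,
            (per s (b : Fin n)
              * Nat.card (Subgroup.centralizer ({cycleProd g s (b : Fin n)} : Set G))) := by
    intro σ
    rw [Fintype.card_pi]
    exact Finset.prod_congr rfl fun b _ => inner σ b
  calc (∑ σ : TP, Fintype.card _) = ∑ σ : TP, ∏ b : Reps s,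
        (per s (b : Fin n)
          * Nat.card (Subgroup.centralizer ({cycleProd g s (b : Fin n)} : Set G))) :=
        Finset.sum_congr rfl fun σ _ => outer σ
    _ = _ := by
        rw [Finset.sum_const, Finset.card_univ, smul_eq_mul, Nat.card_eq_fintype_card]

end Count

/-! ## type of a cycle, counting the cycle permutations -/

section TypeCount

variable {n : ℕ} {G : Type*} [Group G] [Fintype G] (g : Fin n → G) (s : Equiv.Perm (Fin n))

noncomputable local instance : Fintype (Quot (IsConj (α := G))) :=
  @Fintype.ofFinite _ (Finite.of_surjective (Quot.mk _) (Quot.mk_surjective))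

/-- the type `(length, class)` of the cycle of a representative. -/
noncomputable def fType (b : Reps s) : Fin (n + 1) × Quot (IsConj (α := G)) :=
  (⟨per s (b : Fin n), Nat.lt_succ_of_le (per_le s (b : Fin n))⟩,
    Quot.mk IsConj (cycleProd g s (b : Fin n)))

open scoped Classical in
lemma card_tp :
    Nat.card {σ : Equiv.Perm (Reps s) // ∀ b : Reps s,
        per s ((σ b) : Fin n) = per s (b : Fin n)
          ∧ IsConj (cycleProd g s ((σ b) : Fin n)) (cycleProd g s (b : Fin n))}
      = ∏ p : Fin (n + 1) × Quot (IsConj (α := G)),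
          (Nat.card {b : Reps s // fType g s b = p}).factorial := by
  classical
  have E : {σ : Equiv.Perm (Reps s) // ∀ b : Reps s,
        per s ((σ b) : Fin n) = per s (b : Fin n)
          ∧ IsConj (cycleProd g s ((σ b) : Fin n)) (cycleProd g s (b : Fin n))}
      ≃ {σ : Equiv.Perm (Reps s) // fType g s ∘ σ = fType g s} := by
    refine Equiv.subtypeEquivRight fun σ => ?_
    rw [funext_iff]
    refine forall_congr' fun b => ?_
    rw [Function.comp_apply, Prod.ext_iff]
    unfold fType
    rw [Fin.mk.injEq, quot_mk_eq_iff]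
  rw [Nat.card_congr E, Nat.card_eq_fintype_card, DomMulAct.stabilizer_card]
  refine Finset.prod_congr rfl fun p _ => ?_
  rw [Nat.card_eq_fintype_card]

lemma mcount_fiber (p : Fin (n + 1) × Quot (IsConj (α := G))) :
    mCount g s ((p.1 : ℕ)) p.2.out = Nat.card {b : Reps s // fType g s b = p} := by
  classical
  rcases Nat.eq_zero_or_pos (p.1 : ℕ) with h0 | hpos
  · -- both sides are zero-ish
    have h1 : mCount g s ((p.1 : ℕ)) p.2.out = 0 := by rw [h0]; simp [mCount]
    have h2 : Nat.card {b : Reps s // fType g s b = p} = 0 := by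
      rw [Nat.card_eq_zero]
      left
      refine ⟨fun b => ?_⟩
      have h3 : ((fType g s b.val).1 : ℕ) = per s (b.val : Fin n) := rfl
      have h4 := per_pos s (b.val : Fin n)
      have h5 := congrArg (fun q => ((q.1 : Fin (n+1)) : ℕ)) b.prop
      rw [h3] at h5
      omega
    rw [h1, h2]
  · unfold mCount
    simp only [← per_def]
    rw [card_points_eq s g ((p.1 : ℕ)) p.2.out, Nat.mul_div_cancel_left _ hpos]
    refine Nat.card_congr (Equiv.subtypeEquivRight fun b => ?_)
    unfold fType
    rw [Prod.ext_iff, Fin.ext_iff, isConj_out]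

end TypeCount

section Final

variable {n : ℕ} {G : Type*} [Group G] [Fintype G] (g : Fin n → G) (s : Equiv.Perm (Fin n))

noncomputable local instance : Fintype (Quot (IsConj (α := G))) :=
  @Fintype.ofFinite _ (Finite.of_surjective (Quot.mk _) (Quot.mk_surjective))

open scoped Classical in
lemma final_count :
    Nat.card {σ : Equiv.Perm (Reps s) // ∀ b : Reps s,
          per s ((σ b) : Fin n) = per s (b : Fin n)
            ∧ IsConj (cycleProd g s ((σ b) : Fin n)) (cycleProd g s (b : Fin n))}
      * ∏ b : Reps s,
          (per s (b : Fin n)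
            * Nat.card (Subgroup.centralizer ({cycleProd g s (b : Fin n)} : Set G)))
      = ∏ᶠ (r : ℕ) (_ : 1 ≤ r), ∏ᶠ q : Quot (IsConj (α := G)),
          (mCount g s r q.out).factorial
            * (r * Nat.card ↥(Subgroup.centralizer ({q.out} : Set G)))
                ^ mCount g s r q.out := by
  classical
  rw [card_tp g s]
  -- regroup the power part by type
  have hpow : (∏ b : Reps s,
        (per s (b : Fin n)
          * Nat.card (Subgroup.centralizer ({cycleProd g s (b : Fin n)} : Set G))))
      = ∏ p : Fin (n + 1) × Quot (IsConj (α := G)),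
          (((p.1 : ℕ)) * Nat.card (Subgroup.centralizer ({p.2.out} : Set G)))
            ^ (Nat.card {b : Reps s // fType g s b = p}) := by
    have step1 : (∏ b : Reps s,
          (per s (b : Fin n)
            * Nat.card (Subgroup.centralizer ({cycleProd g s (b : Fin n)} : Set G))))
        = ∏ b : Reps s,
            ((((fType g s b).1 : ℕ))
              * Nat.card (Subgroup.centralizer ({(fType g s b).2.out} : Set G))) := by
      refine Finset.prod_congr rfl fun b _ => ?_
      congr 1
      refine card_centralizer_conj ?_
      exact (isConj_out (Quot.mk IsConj (cycleProd g s (b : Fin n)))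
        (cycleProd g s (b : Fin n))).2 rfl
    rw [step1, Finset.prod_comp
      (fun p : Fin (n + 1) × Quot (IsConj (α := G)) =>
        (((p.1 : ℕ)) * Nat.card (Subgroup.centralizer ({p.2.out} : Set G))))
      (fType g s)]
    have hcard : ∀ p : Fin (n + 1) × Quot (IsConj (α := G)),
        (Finset.filter (fun b => fType g s b = p) Finset.univ).card
          = Nat.card {b : Reps s // fType g s b = p} := fun p => by
      rw [Nat.card_eq_fintype_card, Fintype.card_subtype]
    simp only [hcard]
    refine Finset.prod_subset (Finset.subset_univ _) fun p _ hp => ?_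
    have hzero : Nat.card {b : Reps s // fType g s b = p} = 0 := by
      rw [Nat.card_eq_zero]
      left
      refine ⟨fun b => ?_⟩
      exact hp (Finset.mem_image.2 ⟨b.val, Finset.mem_univ _, b.prop⟩)
    rw [hzero, pow_zero]
  rw [hpow, ← Finset.prod_mul_distrib]
  -- now handle the finprod side
  have hmc0 : ∀ c : G, mCount g s 0 c = 0 := fun c => by simp [mCount]
  have hbig : ∀ r : ℕ, n < r → ∀ c : G, mCount g s r c = 0 := by
    intro r hr c
    have hz : Nat.card {i : Fin n // Function.minimalPeriod (⇑s) i = r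
        ∧ IsConj (cycleProd g s i) c} = 0 := by
      rw [Nat.card_eq_zero]
      left
      refine ⟨fun i => ?_⟩
      have h1 := per_le s i.val
      rw [per_def] at h1
      have h2 := i.prop.1
      omega
    rw [mCount, hz, Nat.zero_div]
  set F : ℕ → ℕ := fun r => ∏ q : Quot (IsConj (α := G)),
      (mCount g s r q.out).factorial
        * (r * Nat.card ↥(Subgroup.centralizer ({q.out} : Set G))) ^ mCount g s r q.out
    with hF
  have houter : (∏ᶠ (r : ℕ) (_ : 1 ≤ r), ∏ᶠ q : Quot (IsConj (α := G)),
      (mCount g s r q.out).factorial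
        * (r * Nat.card ↥(Subgroup.centralizer ({q.out} : Set G))) ^ mCount g s r q.out)
      = ∏ᶠ (r : ℕ) (_ : 1 ≤ r), F r :=
    finprod_congr fun r => finprod_congr fun _ => finprod_eq_prod_of_fintype _
  rw [houter]
  have hΦsupp : (Function.mulSupport fun r => ∏ᶠ _ : 1 ≤ r, F r)
      ⊆ ↑(Finset.range (n + 1)) := by
    intro r hr
    simp only [Finset.coe_range, Set.mem_Iio]
    by_contra hcon
    push_neg at hcon
    have hr1 : 1 ≤ r := by omega
    apply hr
    show (∏ᶠ _ : 1 ≤ r, F r) = 1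
    rw [finprod_eq_if, if_pos hr1, hF]
    refine Finset.prod_eq_one fun q _ => ?_
    rw [hbig r (by omega) q.out]
    simp
  rw [finprod_eq_prod_of_mulSupport_subset _ hΦsupp]
  have hrange : ∀ r ∈ Finset.range (n + 1), (∏ᶠ _ : 1 ≤ r, F r) = F r := by
    intro r _
    rcases Nat.eq_zero_or_pos r with rfl | hr
    · rw [finprod_eq_if, if_neg (by omega), hF]
      symm
      refine Finset.prod_eq_one fun q _ => ?_
      rw [hmc0 q.out]
      simp
    · rw [finprod_eq_if]
      exact if_pos hr
  rw [Finset.prod_congr rfl hrange, ← Fin.prod_univ_eq_prod_range F (n + 1)]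
  have hsplit : (∏ r : Fin (n + 1), F (r : ℕ))
      = ∏ p : Fin (n + 1) × Quot (IsConj (α := G)),
          (mCount g s ((p.1 : ℕ)) p.2.out).factorial
            * (((p.1 : ℕ)) * Nat.card ↥(Subgroup.centralizer ({p.2.out} : Set G)))
                ^ mCount g s ((p.1 : ℕ)) p.2.out := by
    simp only [hF]
    exact (Fintype.prod_prod_type' fun (a : Fin (n + 1)) (b : Quot (IsConj (α := G))) =>
      (mCount g s ((a : ℕ)) b.out).factorial
        * (((a : ℕ)) * Nat.card ↥(Subgroup.centralizer ({b.out} : Set G)))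
            ^ mCount g s ((a : ℕ)) b.out).symm
  rw [hsplit]
  refine Finset.prod_congr rfl fun p _ => ?_
  rw [mcount_fiber g s p]

end Final


end WCC

/-- **Order of centralizers in wreath products.** For a finite group `G`, `n ≥ 1` and an
element `a = ((g₁,…,gₙ),s)` of `Gₙ = G ≀ Sₙ` of type `{m_r(c)}`,
`|C_{Gₙ}(a)| = ∏_{r ≥ 1} ∏_{[c]} m_r(c)! · (r·|C_G(c)|)^{m_r(c)}`, the product running over
all `r ≥ 1` and all conjugacy classes of elements of `G` (formalized as the quotient of `G`
by the conjugation relation `IsConj`, with `Quot.out` picking a representative — the factor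
does not depend on this choice). -/
theorem wreath_centralizer_card
    (G : Type*) [Group G] [Fintype G] (n : ℕ) (hn : 1 ≤ n) (a : WreathProduct G n) :
    Nat.card ↥(Subgroup.centralizer ({a} : Set (WreathProduct G n)))
      = ∏ᶠ (r : ℕ) (_ : 1 ≤ r), ∏ᶠ q : Quot (IsConj (α := G)),
          (mCount a.left a.right r q.out).factorial
            * (r * Nat.card ↥(Subgroup.centralizer ({q.out} : Set G)))
                ^ mCount a.left a.right r q.out := by
  classical
  have h1 : Nat.card ↥(Subgroup.centralizer ({a} : Set (WreathProduct G n)))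
      = Nat.card {x : WreathProduct G n //
          x * (⟨a.left, a.right⟩ : WreathProduct G n)
            = (⟨a.left, a.right⟩ : WreathProduct G n) * x} :=
    Nat.card_congr (Equiv.subtypeEquivRight fun x =>
      Subgroup.mem_centralizer_singleton_iff)
  rw [h1, WCC.card_cent_eq a.left a.right, WCC.card_data a.left a.right]
  exact WCC.final_count a.left a.right
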